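/- (Lemma 1: global asymptotic stability of the reduced system.) Let c ∈ ℝ^m be nonzero, μ > 0, and ε_u > 0. Consider the linear system on ℝ^m × ℝ given by u̇ = (1/ε_u)(−(c cᵀ + μI)u + c ē), ē̇ = −cᵀu. Then the equilibrium at the origin is globally asymptotically stable: the origin is Lyapunov stable and every solution (u(t), ē(t)) converges to (0, 0) as t → ∞. -/

import Mathlib

open Matrix

/-- A solution (on the time interval `[0,∞)`) of the reduced inverse-learning system
`u̇ = (1/ε_u)(−(ccᵀ + μI)u + c ē)`, `ē̇ = −cᵀu`. -/
def IsReducedSolution {m : ℕ} (c : Fin m → ℝ) (μ εu : ℝ)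
    (u : ℝ → EuclideanSpace ℝ (Fin m)) (ebar : ℝ → ℝ) : Prop :=
  ∀ t : ℝ, 0 ≤ t →
    HasDerivWithinAt u
      (WithLp.toLp 2 (εu⁻¹ • (ebar t • c -
        (vecMulVec c c + μ • (1 : Matrix (Fin m) (Fin m) ℝ)).mulVec (u t)) : Fin m → ℝ) :
        EuclideanSpace ℝ (Fin m)) (Set.Ici 0) t ∧
    HasDerivWithinAt ebar (-(c ⬝ᵥ u t)) (Set.Ici 0) t

lemma reduced_vec_eq {m : ℕ} (c : Fin m → ℝ) (μ εu e : ℝ) (v : EuclideanSpace ℝ (Fin m)) :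
    (WithLp.toLp 2 (εu⁻¹ • (e • c - (vecMulVec c c + μ • (1 : Matrix (Fin m) (Fin m) ℝ)).mulVec
        (v : Fin m → ℝ)) : Fin m → ℝ) : EuclideanSpace ℝ (Fin m))
    = εu⁻¹ • (e • ((WithLp.equiv 2 (Fin m → ℝ)).symm c) -
        ((inner ℝ ((WithLp.equiv 2 (Fin m → ℝ)).symm c) v : ℝ) •
          ((WithLp.equiv 2 (Fin m → ℝ)).symm c) + μ • v)) := by
  ext i
  simp only [PiLp.smul_apply, PiLp.sub_apply, PiLp.add_apply, smul_eq_mul,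
    WithLp.equiv_symm_apply, PiLp.toLp_apply, PiLp.inner_apply, RCLike.inner_apply, starRingEnd_apply,
    star_trivial, Matrix.add_mulVec, Matrix.smul_mulVec, Matrix.one_mulVec,
    Pi.add_apply, Pi.smul_apply, smul_eq_mul]
  simp [Matrix.mulVec, dotProduct, vecMulVec_apply, Finset.mul_sum, Finset.sum_mul]
  rw [Finset.sum_congr rfl (fun j _ => by ring :
    ∀ j ∈ Finset.univ, c i * c j * v j = c j * v j * c i), ← Finset.sum_mul]
  ring_nf
  left; rw [Finset.sum_mul]; exact Finset.sum_congr rfl (fun j _ => by ring)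

lemma dot_eq_inner {m : ℕ} (c : Fin m → ℝ) (v : EuclideanSpace ℝ (Fin m)) :
    c ⬝ᵥ (v : Fin m → ℝ) = (inner ℝ ((WithLp.equiv 2 (Fin m → ℝ)).symm c) v : ℝ) := by
  simp [dotProduct, PiLp.inner_apply, RCLike.inner_apply, WithLp.equiv_symm_apply, PiLp.toLp_apply]
  exact Finset.sum_congr rfl (fun j _ => by ring)

set_option maxHeartbeats 1000000 in
lemma key_decay {m : ℕ} (c : Fin m → ℝ) (μ εu : ℝ) (hμ : 0 < μ) (hεu : 0 < εu)
    (α k : ℝ) (hα : 0 < α) (hk : 0 < k)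
    (hα2 : α * εu ≤ 1/2)
    (hα3 : α * ‖((WithLp.equiv 2 (Fin m → ℝ)).symm c : EuclideanSpace ℝ (Fin m))‖^2 ≤ 1/2)
    (hα4 : α * (2*εu*‖((WithLp.equiv 2 (Fin m → ℝ)).symm c : EuclideanSpace ℝ (Fin m))‖^2 +
      (‖((WithLp.equiv 2 (Fin m → ℝ)).symm c : EuclideanSpace ℝ (Fin m))‖^2+μ)^2)
      ≤ 2*‖((WithLp.equiv 2 (Fin m → ℝ)).symm c : EuclideanSpace ℝ (Fin m))‖^2)
    (hC2 : 0 < ‖((WithLp.equiv 2 (Fin m → ℝ)).symm c : EuclideanSpace ℝ (Fin m))‖^2)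
    (hk2 : k * εu ≤ 4*μ/3)
    (hk3 : k ≤ 2*α*‖((WithLp.equiv 2 (Fin m → ℝ)).symm c : EuclideanSpace ℝ (Fin m))‖^2/3)
    (u : ℝ → EuclideanSpace ℝ (Fin m)) (ebar : ℝ → ℝ)
    (hsol : IsReducedSolution c μ εu u ebar) :
    ∀ t : ℝ, 0 ≤ t →
      εu*‖u t‖^2 + ebar t^2 - 2*α*εu*(ebar t *
          (inner ℝ ((WithLp.equiv 2 (Fin m → ℝ)).symm c) (u t) : ℝ))
        ≤ (εu*‖u 0‖^2 + ebar 0^2 - 2*α*εu*(ebar 0 *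
          (inner ℝ ((WithLp.equiv 2 (Fin m → ℝ)).symm c) (u 0) : ℝ))) * Real.exp (-(k*t)) := by
  set cE : EuclideanSpace ℝ (Fin m) := (WithLp.equiv 2 (Fin m → ℝ)).symm c with hcEdef
  set C2 : ℝ := ‖cE‖^2 with hC2def
  set W : ℝ → ℝ := fun t => εu*‖u t‖^2 + ebar t^2 - 2*α*εu*(ebar t * (inner ℝ cE (u t) : ℝ))
    with hWdef
  set D : ℝ → ℝ := fun t => -2*(inner ℝ cE (u t) : ℝ)^2 - 2*μ*‖u t‖^2
      + 2*α*εu*(inner ℝ cE (u t) : ℝ)^2 - 2*α*C2*ebar t^2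
      + 2*α*(C2+μ)*(ebar t * (inner ℝ cE (u t) : ℝ)) with hDdef
  -- derivative of W
  have hW : ∀ t ∈ Set.Ici (0:ℝ), HasDerivWithinAt W (D t) (Set.Ici 0) t := by
    intro t ht
    obtain ⟨hu, he⟩ := hsol t ht
    rw [reduced_vec_eq] at hu
    rw [dot_eq_inner] at he
    rw [← hcEdef] at hu he
    set U' : EuclideanSpace ℝ (Fin m) :=
        εu⁻¹ • (ebar t • cE - ((inner ℝ cE (u t) : ℝ) • cE + μ • u t)) with hU'def
    have hiu : (inner ℝ (u t) U' : ℝ)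
        = εu⁻¹ * (ebar t * (inner ℝ cE (u t) : ℝ)
          - ((inner ℝ cE (u t) : ℝ) * (inner ℝ cE (u t) : ℝ) + μ * ‖u t‖^2)) := by
      rw [hU'def, real_inner_smul_right, inner_sub_right, inner_add_right,
        real_inner_smul_right, real_inner_smul_right, real_inner_smul_right,
        real_inner_self_eq_norm_sq, real_inner_comm (u t) cE]
    have hic : (inner ℝ cE U' : ℝ)
        = εu⁻¹ * (ebar t * C2 - ((inner ℝ cE (u t) : ℝ) * C2 + μ * (inner ℝ cE (u t) : ℝ))) := by
      rw [hU'def, real_inner_smul_right, inner_sub_right, inner_add_right,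
        real_inner_smul_right, real_inner_smul_right, real_inner_smul_right,
        real_inner_self_eq_norm_sq, ← hC2def]
    have hn : HasDerivWithinAt (fun s => ‖u s‖^2)
        ((inner ℝ (u t) U' : ℝ) + (inner ℝ U' (u t) : ℝ)) (Set.Ici 0) t := by
      have := hu.inner ℝ hu
      simpa only [real_inner_self_eq_norm_sq] using this
    have hq' : HasDerivWithinAt (fun s => (inner ℝ cE (u s) : ℝ)) ((inner ℝ cE U' : ℝ))
        (Set.Ici 0) t := by
      have := (hasDerivWithinAt_const t (Set.Ici (0:ℝ)) cE).inner ℝ hu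
      simpa using this
    have hWt : HasDerivWithinAt W
        (εu * ((inner ℝ (u t) U' : ℝ) + (inner ℝ U' (u t) : ℝ))
          + ((2:ℕ) * ebar t ^ 1 * (-(inner ℝ cE (u t) : ℝ)))
          - (2*α*εu) * ((-(inner ℝ cE (u t) : ℝ)) * (inner ℝ cE (u t) : ℝ)
            + ebar t * (inner ℝ cE U' : ℝ))) (Set.Ici 0) t :=
      ((hn.const_mul εu).add (he.pow 2)).sub ((he.mul hq').const_mul (2*α*εu))
    have hiu2 : (inner ℝ U' (u t) : ℝ)
        = εu⁻¹ * (ebar t * (inner ℝ cE (u t) : ℝ)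
          - ((inner ℝ cE (u t) : ℝ) * (inner ℝ cE (u t) : ℝ) + μ * ‖u t‖^2)) := by
      rw [real_inner_comm]; exact hiu
    convert hWt using 1
    simp only [hiu, hiu2, hic, hDdef]
    field_simp
    ring
  -- key inequality : D t + k * W t ≤ 0
  have hkey : ∀ t : ℝ, D t + k * W t ≤ 0 := by
    intro t
    have hf : (0:ℝ) ≤ ‖u t‖^2 := by positivity
    have hCS : (inner ℝ cE (u t) : ℝ)^2 ≤ C2 * ‖u t‖^2 := by
      have h1 := abs_real_inner_le_norm cE (u t)
      have h2 : |(inner ℝ cE (u t) : ℝ)| ^ 2 ≤ (‖cE‖ * ‖u t‖)^2 :=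
        pow_le_pow_left₀ (abs_nonneg _) h1 2
      rw [sq_abs] at h2
      calc (inner ℝ cE (u t) : ℝ)^2 ≤ (‖cE‖*‖u t‖)^2 := h2
        _ = C2 * ‖u t‖^2 := by rw [hC2def]; ring
    have hB : 0 ≤ 2*C2 - α*(2*εu*C2 + (C2+μ)^2) := by linarith
    simp only [hDdef, hWdef]
    set Q : ℝ := (inner ℝ cE (u t) : ℝ) with hQ
    set E : ℝ := ebar t with hE
    set F : ℝ := ‖u t‖^2 with hF
    have step1 : -2*Q^2 - 2*μ*F + 2*α*εu*Q^2 - 2*α*C2*E^2 + 2*α*(C2+μ)*(E*Q)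
        ≤ -2*μ*F - α*C2*E^2 := by
      have hA := mul_nonneg hα.le (sq_nonneg (C2*E - (C2+μ)*Q))
      have hBq := mul_nonneg (sq_nonneg Q) hB
      have hmul : C2 * (-2*Q^2 - 2*μ*F + 2*α*εu*Q^2 - 2*α*C2*E^2 + 2*α*(C2+μ)*(E*Q))
          ≤ C2 * (-2*μ*F - α*C2*E^2) := by nlinarith [hA, hBq]
      exact le_of_mul_le_mul_left hmul hC2
    have hup : εu*F + E^2 - 2*α*εu*(E*Q) ≤ (3/2)*(εu*F + E^2) := by
      nlinarith [mul_nonneg (mul_nonneg hα.le hεu.le) (sq_nonneg (E - Q)),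
        mul_nonneg (mul_nonneg hα.le hεu.le) (sq_nonneg (E + Q)),
        mul_le_mul_of_nonneg_left hCS (mul_nonneg hα.le hεu.le),
        mul_le_mul_of_nonneg_right hα3 (mul_nonneg hεu.le hf),
        mul_le_mul_of_nonneg_right hα2 (sq_nonneg E)]
    have step2 : k * (εu*F + E^2 - 2*α*εu*(E*Q)) ≤ 2*μ*F + α*C2*E^2 := by
      have h1 : k * (εu*F + E^2 - 2*α*εu*(E*Q)) ≤ k * ((3/2)*(εu*F + E^2)) :=
        mul_le_mul_of_nonneg_left hup hk.le
      nlinarith [mul_le_mul_of_nonneg_right hk2 hf,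
        mul_le_mul_of_nonneg_right hk3 (sq_nonneg E)]
    linarith
  -- Gronwall via monotonicity of G
  have hexp : ∀ t : ℝ, HasDerivAt (fun s => Real.exp (k*s)) (Real.exp (k*t) * k) t := by
    intro t
    have h1 : HasDerivAt (fun s : ℝ => k*s) (k*1) t := (hasDerivAt_id t).const_mul k
    have h2 := (Real.hasDerivAt_exp (k*t)).comp t h1
    rw [mul_one] at h2
    exact h2
  set G : ℝ → ℝ := fun t => W t * Real.exp (k*t) with hGdef
  have hGd : ∀ t ∈ Set.Ici (0:ℝ), HasDerivWithinAt G
      ((D t + k * W t) * Real.exp (k*t)) (Set.Ici 0) t := by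
    intro t ht
    have := (hW t ht).mul (hexp t).hasDerivWithinAt
    exact this.congr_deriv (by ring)
  have hmono : AntitoneOn G (Set.Ici 0) := by
    apply antitoneOn_of_hasDerivWithinAt_nonpos (convex_Ici 0)
      (fun t ht => (hGd t ht).continuousWithinAt)
      (fun t ht => (hGd t (interior_subset ht)).mono interior_subset)
    intro t _
    exact mul_nonpos_of_nonpos_of_nonneg (hkey t) (Real.exp_pos _).le
  intro t ht
  have h0 : G t ≤ G 0 := hmono (Set.self_mem_Ici) ht ht
  have hG0 : G 0 = W 0 := by simp [hGdef]
  have h1 : W t * Real.exp (k*t) ≤ W 0 := by rw [← hG0]; exact h0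
  have h2 := mul_le_mul_of_nonneg_right h1 (Real.exp_pos (-(k*t))).le
  calc W t = W t * Real.exp (k*t) * Real.exp (-(k*t)) := by
        rw [mul_assoc, ← Real.exp_add]; simp
    _ ≤ W 0 * Real.exp (-(k*t)) := h2

lemma sandwich_bounds {E : Type*} [NormedAddCommGroup E] [InnerProductSpace ℝ E]
    (cE : E) (εu α : ℝ) (hεu : 0 < εu) (hα : 0 < α)
    (hα2 : α*εu ≤ 1/2) (hα3 : α*‖cE‖^2 ≤ 1/2) (v : E) (e : ℝ) :
    (1/2)*(εu*‖v‖^2 + e^2) ≤ εu*‖v‖^2 + e^2 - 2*α*εu*(e*(inner ℝ cE v : ℝ)) ∧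
    εu*‖v‖^2 + e^2 - 2*α*εu*(e*(inner ℝ cE v : ℝ)) ≤ (3/2)*(εu*‖v‖^2 + e^2) := by
  have hf : (0:ℝ) ≤ ‖v‖^2 := by positivity
  have hCS : (inner ℝ cE v : ℝ)^2 ≤ ‖cE‖^2 * ‖v‖^2 := by
    have h1 := abs_real_inner_le_norm cE v
    have h2 : |(inner ℝ cE v : ℝ)| ^ 2 ≤ (‖cE‖ * ‖v‖)^2 :=
      pow_le_pow_left₀ (abs_nonneg _) h1 2
    rw [sq_abs] at h2
    calc (inner ℝ cE v : ℝ)^2 ≤ (‖cE‖*‖v‖)^2 := h2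
      _ = ‖cE‖^2 * ‖v‖^2 := by ring
  constructor <;>
  nlinarith [mul_nonneg (mul_nonneg hα.le hεu.le) (sq_nonneg (e - (inner ℝ cE v : ℝ))),
    mul_nonneg (mul_nonneg hα.le hεu.le) (sq_nonneg (e + (inner ℝ cE v : ℝ))),
    mul_le_mul_of_nonneg_left hCS (mul_nonneg hα.le hεu.le),
    mul_le_mul_of_nonneg_right hα3 (mul_nonneg hεu.le hf),
    mul_le_mul_of_nonneg_right hα2 (sq_nonneg e)]


set_option maxHeartbeats 1000000 in
/-- **Lemma 1.** For `c ≠ 0`, `μ > 0`, `ε_u > 0`, the origin of the reduced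
system `u̇ = (1/ε_u)(−(ccᵀ + μI)u + c ē)`, `ē̇ = −cᵀu` is globally asymptotically stable:
it is Lyapunov stable and every solution converges to the origin as `t → ∞`. -/
theorem reduced_system_globally_asymptotically_stable {m : ℕ}
    (c : Fin m → ℝ) (hc : c ≠ 0) (μ εu : ℝ) (hμ : 0 < μ) (hεu : 0 < εu) :
    ((∀ ε > (0 : ℝ), ∃ δ > (0 : ℝ),
      ∀ (u : ℝ → EuclideanSpace ℝ (Fin m)) (ebar : ℝ → ℝ),
        IsReducedSolution c μ εu u ebar →
        ‖u 0‖ < δ → |ebar 0| < δ →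
        ∀ t : ℝ, 0 ≤ t → ‖u t‖ < ε ∧ |ebar t| < ε) ∧
    (∀ (u : ℝ → EuclideanSpace ℝ (Fin m)) (ebar : ℝ → ℝ),
        IsReducedSolution c μ εu u ebar →
        Filter.Tendsto u Filter.atTop (nhds 0) ∧
        Filter.Tendsto ebar Filter.atTop (nhds 0))) := by
  set cE : EuclideanSpace ℝ (Fin m) := (WithLp.equiv 2 (Fin m → ℝ)).symm c with hcEdef
  have hcE : cE ≠ 0 := by
    intro h
    exact hc (by simpa [hcEdef] using congrArg (WithLp.equiv 2 (Fin m → ℝ)) h)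
  have hC2 : (0:ℝ) < ‖cE‖^2 := by
    have := norm_pos_iff.2 hcE
    positivity
  set C2 : ℝ := ‖cE‖^2 with hC2def
  have hd : (0:ℝ) < 2*εu*C2 + (C2+μ)^2 := by positivity
  set α : ℝ := min (1/(2*εu)) (min (1/(2*C2)) (2*C2/(2*εu*C2+(C2+μ)^2))) with hαdef
  have hα : 0 < α := lt_min (by positivity) (lt_min (by positivity) (by positivity))
  have hα2 : α * εu ≤ 1/2 := by
    have h := min_le_left (1/(2*εu)) (min (1/(2*C2)) (2*C2/(2*εu*C2+(C2+μ)^2)))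
    have key : (1/(2*εu))*εu = 1/2 := by field_simp
    nlinarith [mul_le_mul_of_nonneg_right h hεu.le]
  have hα3 : α * C2 ≤ 1/2 := by
    have h := (min_le_right (1/(2*εu)) _).trans
      (min_le_left (1/(2*C2)) (2*C2/(2*εu*C2+(C2+μ)^2)))
    have key : (1/(2*C2))*C2 = 1/2 := by field_simp
    nlinarith [mul_le_mul_of_nonneg_right h hC2.le]
  have hα4 : α * (2*εu*C2 + (C2+μ)^2) ≤ 2*C2 := by
    have h := (min_le_right (1/(2*εu)) _).trans
      (min_le_right (1/(2*C2)) (2*C2/(2*εu*C2+(C2+μ)^2)))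
    rw [le_div_iff₀ hd] at h
    exact h
  set k : ℝ := min (4*μ/(3*εu)) (2*α*C2/3) with hkdef
  have hk : 0 < k := lt_min (by positivity) (by positivity)
  have hk2 : k * εu ≤ 4*μ/3 := by
    have h : k ≤ 4*μ/(3*εu) := min_le_left _ _
    rw [show 4*μ/(3*εu) = (4*μ/3)/εu by ring, le_div_iff₀ hεu] at h
    exact h
  have hk3 : k ≤ 2*α*C2/3 := min_le_right _ _
  have key := key_decay c μ εu hμ hεu α k hα hk hα2 hα3 hα4 hC2 hk2 hk3
  have sand := sandwich_bounds cE εu α hεu hα hα2 hα3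
  constructor
  · -- stability
    intro ε hε
    have hm : (0:ℝ) < min εu 1 := lt_min hεu one_pos
    have hq : (0:ℝ) < min εu 1 / (6*(εu+1)) := by positivity
    set δ : ℝ := ε * Real.sqrt (min εu 1 / (6*(εu+1))) with hδdef
    have hδ : 0 < δ := mul_pos hε (Real.sqrt_pos.2 hq)
    refine ⟨δ, hδ, ?_⟩
    intro u ebar hsol hu0 he0 t ht
    have hWt := key u ebar hsol t ht
    rw [← hcEdef] at hWt
    have hl0 := (sand (u 0) (ebar 0)).1
    have hu0' := (sand (u 0) (ebar 0)).2
    have hlt := (sand (u t) (ebar t)).1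
    have hW0nn : (0:ℝ) ≤ εu*‖u 0‖^2 + ebar 0^2 - 2*α*εu*(ebar 0 * (inner ℝ cE (u 0) : ℝ)) := by
      nlinarith [sq_nonneg (ebar 0), norm_nonneg (u 0), sq_nonneg ‖u 0‖]
    have hexp1 : Real.exp (-(k*t)) ≤ 1 := by
      rw [show (1:ℝ) = Real.exp 0 by simp]
      exact Real.exp_le_exp.2 (by nlinarith)
    have hWW : εu*‖u t‖^2 + ebar t^2 - 2*α*εu*(ebar t * (inner ℝ cE (u t) : ℝ))
        ≤ εu*‖u 0‖^2 + ebar 0^2 - 2*α*εu*(ebar 0 * (inner ℝ cE (u 0) : ℝ)) := by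
      calc _ ≤ _ * Real.exp (-(k*t)) := hWt
        _ ≤ _ := mul_le_of_le_one_right hW0nn hexp1
    have hδsq : δ^2 * (6*(εu+1)) = ε^2 * min εu 1 := by
      rw [hδdef, mul_pow, Real.sq_sqrt hq.le]
      field_simp
    have h4 : ‖u 0‖^2 < δ^2 := by
      have := pow_lt_pow_left₀ hu0 (norm_nonneg _) (by norm_num : 2 ≠ 0)
      exact this
    have h5 : ebar 0^2 < δ^2 := by
      have := pow_lt_pow_left₀ he0 (abs_nonneg _) (by norm_num : 2 ≠ 0)
      rwa [sq_abs] at this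
    have hmεu : min εu 1 ≤ εu := min_le_left _ _
    have hm1 : min εu 1 ≤ (1:ℝ) := min_le_right _ _
    have hε2 : (0:ℝ) < ε^2 := by positivity
    -- chains
    have hu2 : ‖u t‖^2 < ε^2 := by
      nlinarith [sq_nonneg (ebar t), mul_pos hε2 hm, mul_pos hε2 hεu]
    have he2 : ebar t^2 < ε^2 := by
      nlinarith [mul_nonneg hεu.le (sq_nonneg ‖u t‖), mul_pos hε2 hm, mul_pos hε2 hεu]
    constructor
    · exact lt_of_pow_lt_pow_left₀ 2 hε.le hu2
    · have : |ebar t|^2 < ε^2 := by rwa [sq_abs]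
      exact lt_of_pow_lt_pow_left₀ 2 hε.le this
  · -- convergence
    intro u ebar hsol
    have hkd := key u ebar hsol
    have hexp0 : Filter.Tendsto (fun t : ℝ => Real.exp (-(k*t))) Filter.atTop (nhds 0) := by
      apply Real.tendsto_exp_comp_nhds_zero.2
      exact (Filter.tendsto_neg_atTop_atBot).comp ((Filter.tendsto_const_mul_atTop_of_pos hk).2 Filter.tendsto_id)
    set W0 : ℝ := εu*‖u 0‖^2 + ebar 0^2 - 2*α*εu*(ebar 0 * (inner ℝ cE (u 0) : ℝ)) with hW0def
    have hWbound : ∀ t : ℝ, 0 ≤ t →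
        εu*‖u t‖^2 + ebar t^2 - 2*α*εu*(ebar t * (inner ℝ cE (u t) : ℝ))
          ≤ W0 * Real.exp (-(k*t)) := by
      intro t ht
      have := hkd t ht
      rw [← hcEdef] at this
      exact this
    have hgt : Filter.Tendsto (fun t : ℝ => (2/εu) * (W0 * Real.exp (-(k*t))) )
        Filter.atTop (nhds 0) := by
      have h1 := (hexp0.const_mul W0).const_mul (2/εu)
      simpa using h1
    have hgt2 : Filter.Tendsto (fun t : ℝ => 2 * (W0 * Real.exp (-(k*t))) )
        Filter.atTop (nhds 0) := by
      have h1 := (hexp0.const_mul W0).const_mul (2:ℝ)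
      simpa using h1
    have hsqu : Filter.Tendsto (fun t : ℝ => ‖u t‖^2) Filter.atTop (nhds 0) := by
      apply squeeze_zero' (Filter.Eventually.of_forall (fun t => by positivity)) ?_ hgt
      filter_upwards [Filter.eventually_ge_atTop (0:ℝ)] with t ht
      have h1 := hWbound t ht
      have h2 := (sand (u t) (ebar t)).1
      have h3 : εu * ‖u t‖^2 ≤ 2 * (W0 * Real.exp (-(k*t))) := by
        nlinarith [sq_nonneg (ebar t)]
      rw [show (2/εu)*(W0*Real.exp (-(k*t))) = (2*(W0*Real.exp (-(k*t))))/εu by ring,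
        le_div_iff₀ hεu]
      linarith
    have hsqe : Filter.Tendsto (fun t : ℝ => (ebar t)^2) Filter.atTop (nhds 0) := by
      apply squeeze_zero' (Filter.Eventually.of_forall (fun t => sq_nonneg _)) ?_ hgt2
      filter_upwards [Filter.eventually_ge_atTop (0:ℝ)] with t ht
      have h1 := hWbound t ht
      have h2 := (sand (u t) (ebar t)).1
      nlinarith [mul_nonneg hεu.le (sq_nonneg ‖u t‖)]
    have hnu : Filter.Tendsto (fun t : ℝ => ‖u t‖) Filter.atTop (nhds 0) := by
      have h1 := (Real.continuous_sqrt.tendsto 0).comp hsqu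
      simp only [Function.comp_def, Real.sqrt_zero] at h1
      convert h1 using 2 with t
      exact (Real.sqrt_sq (norm_nonneg _)).symm
    have hne : Filter.Tendsto (fun t : ℝ => |ebar t|) Filter.atTop (nhds 0) := by
      have h1 := (Real.continuous_sqrt.tendsto 0).comp hsqe
      simp only [Function.comp_def, Real.sqrt_zero] at h1
      convert h1 using 2 with t
      exact (Real.sqrt_sq_eq_abs _).symm
    constructor
    · rw [tendsto_zero_iff_norm_tendsto_zero]
      exact hnu
    · rw [tendsto_zero_iff_norm_tendsto_zero]
      simpa [Real.norm_eq_abs] using hne
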